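/- For every triple (g, h₁, h₂) with g ∈ S(A) and h₁, h₂ ∈ S(Ā), the map τ_(g,h₁,h₂) : a ↦ (g⋈h₁)⁻¹ · a · (g⋈h₂) is a semigroup automorphism of (IS_n, *), and the map (g, h₁, h₂) ↦ τ_(g,h₁,h₂) is an injective group homomorphism from S(A) × S(Ā) × S(Ā) into Aut(IS_n, *). -/

import Mathlib

open Equiv

/-- `IS n` : the symmetric inverse semigroup on `{1,…,n}`, modeled as partial
equivalences of `Fin n`.  Composition is left-to-right: `(x.trans y) t = y (x t)`. -/
abbrev IS (n : ℕ) := PEquiv (Fin n) (Fin n)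

/-- The domain of a partial injective transformation. -/
def sdom {n : ℕ} (x : IS n) : Set (Fin n) := {a | (x a).isSome}

/-- The image of a partial injective transformation. -/
def sim {n : ℕ} (x : IS n) : Set (Fin n) := {b | (x.symm b).isSome}

/-- The rank of a partial injective transformation: the cardinality of its image. -/
noncomputable def srank {n : ℕ} (x : IS n) : ℕ := Nat.card (sim x)

/-- The set `A = {1,…,k}` inside `Fin n`, i.e. the first `k` elements. -/
def SetA (n k : ℕ) : Set (Fin n) := {i | (i : ℕ) < k}

/-- The idempotent `e` acting identically on `A`, with `dom e = im e = A`. -/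
def sandE (n k : ℕ) : IS n where
  toFun i := if (i : ℕ) < k then some i else none
  invFun i := if (i : ℕ) < k then some i else none
  inv a b := by
    try dsimp only
    split_ifs with h1 h2 <;>
      simp_all [Option.mem_def, eq_comm] <;> rintro rfl <;> omega

/-- The sandwich multiplication `x * y = x e y` (left-to-right composition). -/
def smul (n k : ℕ) (x y : IS n) : IS n := (x.trans (sandE n k)).trans y

/-- `g⋈h` : the permutation of `Fin n` acting as `g` on `A` and as `h` on `Ā`. -/
def bowtie {n : ℕ} (k : ℕ) (g : Perm {x : Fin n // (x : ℕ) < k})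
    (h : Perm {x : Fin n // ¬ (x : ℕ) < k}) : Perm (Fin n) :=
  Equiv.Perm.subtypeCongr g h

/-- `τ_(g,h₁,h₂) : a ↦ (g⋈h₁)⁻¹ · a · (g⋈h₂)` (ordinary, left-to-right, composition). -/
def tauMap {n : ℕ} (k : ℕ) (g : Perm {x : Fin n // (x : ℕ) < k})
    (h₁ h₂ : Perm {x : Fin n // ¬ (x : ℕ) < k}) (a : IS n) : IS n :=
  ((bowtie k g h₁).symm.toPEquiv.trans a).trans (bowtie k g h₂).toPEquiv

section aux

variable {n k : ℕ}

lemma sandE_apply (i : Fin n) :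
    sandE n k i = if (i : ℕ) < k then some i else none := rfl

lemma bowtie_apply_lt (g : Perm {x : Fin n // (x : ℕ) < k})
    (h : Perm {x : Fin n // ¬ (x : ℕ) < k}) {t : Fin n} (ht : (t : ℕ) < k) :
    bowtie k g h t = (g ⟨t, ht⟩ : Fin n) :=
  Equiv.Perm.subtypeCongr.left_apply g h ht

lemma bowtie_apply_not_lt (g : Perm {x : Fin n // (x : ℕ) < k})
    (h : Perm {x : Fin n // ¬ (x : ℕ) < k}) {t : Fin n} (ht : ¬ (t : ℕ) < k) :
    bowtie k g h t = (h ⟨t, ht⟩ : Fin n) :=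
  Equiv.Perm.subtypeCongr.right_apply g h ht

/-- Key sandwich identity: `B₂ ∘ e ∘ B₁⁻¹ = e`. -/
lemma sandwich_key (g : Perm {x : Fin n // (x : ℕ) < k})
    (h₁ h₂ : Perm {x : Fin n // ¬ (x : ℕ) < k}) :
    ((bowtie k g h₂).toPEquiv.trans (sandE n k)).trans
      (bowtie k g h₁).symm.toPEquiv = sandE n k := by
  refine PEquiv.ext fun t => ?_
  show ((((bowtie k g h₂).toPEquiv t).bind (sandE n k)).bind
      (bowtie k g h₁).symm.toPEquiv) = sandE n k t
  rw [Equiv.toPEquiv_apply, Option.bind_some]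
  by_cases ht : (t : ℕ) < k
  · rw [bowtie_apply_lt g h₂ ht]
    have hlt : ((g ⟨t, ht⟩ : {x : Fin n // (x : ℕ) < k}) : Fin n).val < k :=
      (g ⟨t, ht⟩).property
    rw [sandE_apply, if_pos hlt, Option.bind_some, Equiv.toPEquiv_apply]
    have : (bowtie k g h₁).symm ((g ⟨t, ht⟩ : Fin n)) = t := by
      rw [Equiv.symm_apply_eq, bowtie_apply_lt g h₁ ht]
    rw [this, sandE_apply, if_pos ht]
  · rw [bowtie_apply_not_lt g h₂ ht]
    have hlt : ¬ ((h₂ ⟨t, ht⟩ : {x : Fin n // ¬ (x : ℕ) < k}) : Fin n).val < k :=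
      (h₂ ⟨t, ht⟩).property
    rw [sandE_apply, if_neg hlt, Option.bind_none, sandE_apply, if_neg ht]

lemma sandwich_key' (g : Perm {x : Fin n // (x : ℕ) < k})
    (h₁ h₂ : Perm {x : Fin n // ¬ (x : ℕ) < k}) (Z : IS n) :
    (bowtie k g h₂).toPEquiv.trans ((sandE n k).trans
      ((bowtie k g h₁).symm.toPEquiv.trans Z)) = (sandE n k).trans Z := by
  rw [← PEquiv.trans_assoc, ← PEquiv.trans_assoc, sandwich_key g h₁ h₂]

lemma tau_smul (g : Perm {x : Fin n // (x : ℕ) < k})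
    (h₁ h₂ : Perm {x : Fin n // ¬ (x : ℕ) < k}) (x y : IS n) :
    tauMap k g h₁ h₂ (smul n k x y) =
      smul n k (tauMap k g h₁ h₂ x) (tauMap k g h₁ h₂ y) := by
  unfold tauMap smul
  simp only [PEquiv.trans_assoc]
  rw [sandwich_key' g h₁ h₂]

lemma tau_comp (g g' : Perm {x : Fin n // (x : ℕ) < k})
    (h₁ h₂ h₁' h₂' : Perm {x : Fin n // ¬ (x : ℕ) < k}) (a : IS n) :
    tauMap k g' h₁' h₂' (tauMap k g h₁ h₂ a) =
      tauMap k (g' * g) (h₁' * h₁) (h₂' * h₂) a := by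
  unfold tauMap
  have hb : ∀ (h h' : Perm {x : Fin n // ¬ (x : ℕ) < k}),
      bowtie k (g' * g) (h' * h) = (bowtie k g h).trans (bowtie k g' h') := by
    intro h h'
    unfold bowtie
    rw [Equiv.Perm.subtypeCongr.trans]
    rfl
  rw [hb h₁ h₁', hb h₂ h₂']
  simp only [Equiv.toPEquiv_symm, Equiv.toPEquiv_trans, PEquiv.symm_trans_rev,
    PEquiv.trans_assoc]

lemma tau_one (a : IS n) : tauMap k 1 1 1 a = a := by
  unfold tauMap
  have : bowtie (n := n) k 1 1 = Equiv.refl (Fin n) :=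
    Equiv.Perm.subtypeCongr.refl
  rw [this]
  simp [Equiv.toPEquiv_refl, PEquiv.refl_trans, PEquiv.trans_refl]

/-- `tauMap` as a permutation of `IS n`. -/
def tauEquiv (g : Perm {x : Fin n // (x : ℕ) < k})
    (h₁ h₂ : Perm {x : Fin n // ¬ (x : ℕ) < k}) : Equiv.Perm (IS n) where
  toFun := tauMap k g h₁ h₂
  invFun := tauMap k g⁻¹ h₁⁻¹ h₂⁻¹
  left_inv a := by rw [tau_comp]; simp [tau_one]
  right_inv a := by rw [tau_comp]; simp [tau_one]

lemma tau_single (g : Perm {x : Fin n // (x : ℕ) < k})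
    (h₁ h₂ : Perm {x : Fin n // ¬ (x : ℕ) < k}) (t : Fin n) :
    tauMap k g h₁ h₂ (PEquiv.single t t) (bowtie k g h₁ t) =
      some (bowtie k g h₂ t) := by
  unfold tauMap
  show ((((bowtie k g h₁).symm.toPEquiv (bowtie k g h₁ t)).bind
      (PEquiv.single t t)).bind (bowtie k g h₂).toPEquiv) = _
  rw [Equiv.toPEquiv_apply, Equiv.symm_apply_apply, Option.bind_some,
    PEquiv.single_apply, Option.bind_some, Equiv.toPEquiv_apply]

end aux

/-- each `τ_(g,h₁,h₂)` is an automorphism of `(IS_n, *)`, and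
`(g,h₁,h₂) ↦ τ_(g,h₁,h₂)` is an injective group homomorphism from
`S(A) × S(Ā) × S(Ā)` into `Aut(IS_n, *)`. -/
theorem tau_monomorphism (n k : ℕ) (hk : 1 ≤ k) (hkn : k ≤ n) :
    (∀ (g : Perm {x : Fin n // (x : ℕ) < k})
       (h₁ h₂ : Perm {x : Fin n // ¬ (x : ℕ) < k}),
      Function.Bijective (tauMap k g h₁ h₂) ∧
      ∀ x y : IS n, tauMap k g h₁ h₂ (smul n k x y) =
        smul n k (tauMap k g h₁ h₂ x) (tauMap k g h₁ h₂ y)) ∧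
    ∃ Φ : (Perm {x : Fin n // (x : ℕ) < k} × Perm {x : Fin n // ¬ (x : ℕ) < k} ×
            Perm {x : Fin n // ¬ (x : ℕ) < k}) →* Equiv.Perm (IS n),
      Function.Injective Φ ∧
      ∀ (g : Perm {x : Fin n // (x : ℕ) < k})
        (h₁ h₂ : Perm {x : Fin n // ¬ (x : ℕ) < k}) (a : IS n),
          Φ (g, h₁, h₂) a = tauMap k g h₁ h₂ a := by
  constructor
  · intro g h₁ h₂
    exact ⟨(tauEquiv g h₁ h₂).bijective, tau_smul g h₁ h₂⟩
  · refine ⟨{ toFun := fun p => tauEquiv p.1 p.2.1 p.2.2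
              map_one' := ?_
              map_mul' := ?_ }, ?_, ?_⟩
    · exact Equiv.ext fun a => tau_one a
    · intro p q
      exact Equiv.ext fun a => (tau_comp q.1 p.1 q.2.1 q.2.2 p.2.1 p.2.2 a).symm
    · rw [injective_iff_map_eq_one]
      rintro ⟨g, h₁, h₂⟩ hone
      have key : ∀ a : IS n, tauMap k g h₁ h₂ a = a := fun a =>
        congrFun (congrArg (fun (σ : Equiv.Perm (IS n)) => (σ : IS n → IS n)) hone) a
      have hpt : ∀ t : Fin n, bowtie k g h₁ t = t ∧ bowtie k g h₂ t = t := by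
        intro t
        have h1 := tau_single g h₁ h₂ t
        rw [key] at h1
        rcases eq_or_ne (bowtie k g h₁ t) t with heq | hne
        · refine ⟨heq, ?_⟩
          rw [heq, PEquiv.single_apply] at h1
          exact (Option.some_injective _ h1).symm
        · rw [PEquiv.single_apply_of_ne (Ne.symm hne)] at h1
          exact absurd h1 (by simp)
      have hg : g = 1 := Equiv.ext fun x => Subtype.ext (by
        have := (hpt x).1
        rwa [bowtie_apply_lt g h₁ x.property] at this)
      have hh₁ : h₁ = 1 := Equiv.ext fun x => Subtype.ext (by
        have := (hpt x).1
        rwa [bowtie_apply_not_lt g h₁ x.property] at this)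
      have hh₂ : h₂ = 1 := Equiv.ext fun x => Subtype.ext (by
        have := (hpt x).2
        rwa [bowtie_apply_not_lt g h₂ x.property] at this)
      simp [hg, hh₁, hh₂, Prod.ext_iff]
    · intro g h₁ h₂ a; rfl
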